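/- For every positive integer n, ∏_{1 ≤ i ≤ j ≤ n} (i + j + 3)/(i + j − 1) = (1/2)·Cat(n+1)·Cat(n+2), where Cat(m) = C(2m, m)/(m+1) is the m-th Catalan number. -/

import Mathlib

lemma prodA (m c : ℕ) : ∏ i ∈ Finset.Icc 1 m, ((i : ℚ) + c)
    = (Nat.factorial (m + c) : ℚ) / (Nat.factorial c : ℚ) := by
  induction m with
  | zero =>
    simp [div_self, Nat.cast_ne_zero, Nat.factorial_ne_zero]
  | succ m ih =>
    rw [Finset.prod_Icc_succ_top (by omega), ih]
    have : (m + 1 + c).factorial = (m + c).factorial * (m + 1 + c) := by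
      have : m + 1 + c = (m + c) + 1 := by omega
      rw [this, Nat.factorial_succ]; ring
    rw [this]
    push_cast
    have h1 : (Nat.factorial c : ℚ) ≠ 0 := Nat.cast_ne_zero.2 (Nat.factorial_ne_zero c)
    field_simp

lemma inner_prod (k : ℕ) :
    ∏ i ∈ Finset.Icc 1 (k + 1), (((i : ℚ) + (k + 1) + 3) / ((i : ℚ) + (k + 1) - 1))
      = ((2*k+2) * (2*k+3) * (2*k+4) * (2*k+5) : ℚ)
        / ((k+1) * (k+2) * (k+3) * (k+4)) := by
  rw [Finset.prod_div_distrib]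
  have h1 : ∏ i ∈ Finset.Icc 1 (k + 1), ((i : ℚ) + (k + 1) + 3)
      = (Nat.factorial (2*k + 5) : ℚ) / (Nat.factorial (k + 4) : ℚ) := by
    have := prodA (k+1) (k+4)
    have e : (k + 1) + (k + 4) = 2*k + 5 := by omega
    rw [e] at this
    rw [← this]
    apply Finset.prod_congr rfl
    intro i _
    push_cast
    ring
  have h2 : ∏ i ∈ Finset.Icc 1 (k + 1), ((i : ℚ) + (k + 1) - 1)
      = (Nat.factorial (2*k + 1) : ℚ) / (Nat.factorial k : ℚ) := by
    have := prodA (k+1) k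
    have e : (k + 1) + k = 2*k + 1 := by omega
    rw [e] at this
    rw [← this]
    apply Finset.prod_congr rfl
    intro i _
    ring
  rw [h1, h2]
  have e1 : (2*k+5).factorial = (2*k+5) * ((2*k+4) * ((2*k+3) * ((2*k+2) * (2*k+1).factorial))) := by
    rw [show 2*k+5 = (2*k+4)+1 by omega, Nat.factorial_succ,
        show 2*k+4 = (2*k+3)+1 by omega, Nat.factorial_succ,
        show 2*k+3 = (2*k+2)+1 by omega, Nat.factorial_succ,
        show 2*k+2 = (2*k+1)+1 by omega, Nat.factorial_succ]
  have e2 : (k+4).factorial = (k+4) * ((k+3) * ((k+2) * ((k+1) * k.factorial))) := by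
    rw [show k+4 = (k+3)+1 by rfl, Nat.factorial_succ,
        show k+3 = (k+2)+1 by rfl, Nat.factorial_succ,
        show k+2 = (k+1)+1 by rfl, Nat.factorial_succ, Nat.factorial_succ]
  rw [e1, e2]
  have hf1 : (Nat.factorial (2*k+1) : ℚ) ≠ 0 := Nat.cast_ne_zero.2 (Nat.factorial_ne_zero _)
  have hf2 : (Nat.factorial k : ℚ) ≠ 0 := Nat.cast_ne_zero.2 (Nat.factorial_ne_zero _)
  have hk1 : ((k:ℚ)+1) ≠ 0 := by positivity
  have hk2 : ((k:ℚ)+2) ≠ 0 := by positivity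
  have hk3 : ((k:ℚ)+3) ≠ 0 := by positivity
  have hk4 : ((k:ℚ)+4) ≠ 0 := by positivity
  push_cast
  field_simp

lemma central_step (m : ℕ) :
    ((m:ℚ) + 2) * (Nat.choose (2*(m+2)) (m+2) : ℚ)
      = 2 * (2*(m:ℚ)+3) * (Nat.choose (2*(m+1)) (m+1) : ℚ) := by
  have h := Nat.succ_mul_centralBinom_succ (m+1)
  have : (m+2) * Nat.centralBinom (m+2) = 2 * (2*(m+1)+1) * Nat.centralBinom (m+1) := h
  unfold Nat.centralBinom at this
  have := congrArg (fun x : ℕ => (x : ℚ)) this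
  push_cast at this ⊢
  linarith [this]

theorem B4n_product (n : ℕ) (hn : 0 < n) :
    (∏ j ∈ Finset.Icc 1 n, ∏ i ∈ Finset.Icc 1 j,
        (((i : ℚ) + j + 3) / ((i : ℚ) + j - 1)))
      = (1 / 2) * ((Nat.choose (2 * (n + 1)) (n + 1) : ℚ) / ((n : ℚ) + 2))
          * ((Nat.choose (2 * (n + 2)) (n + 2) : ℚ) / ((n : ℚ) + 3)) := by
  induction n, hn using Nat.le_induction with
  | base => norm_num [Nat.choose]
  | succ n hn ih =>
    rw [Finset.prod_Icc_succ_top (by omega), ih]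
    have hinner := inner_prod n
    push_cast at hinner ⊢
    rw [hinner]
    have h1 := central_step n
    have h2 := central_step (n+1)
    push_cast at h1 h2 ⊢
    have hn1 : ((n:ℚ)+1) ≠ 0 := by positivity
    have hn2 : ((n:ℚ)+2) ≠ 0 := by positivity
    have hn3 : ((n:ℚ)+3) ≠ 0 := by positivity
    have hn4 : ((n:ℚ)+4) ≠ 0 := by positivity
    simp only [show n + 1 + 1 = n + 2 from rfl, show n + 1 + 2 = n + 3 from rfl] at h2 ⊢
    field_simp
    linear_combination
      (-((2*(n:ℚ)+4)*(2*(n:ℚ)+5)*((n:ℚ)+3)*((n:ℚ)+4)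
          * (Nat.choose (2*(n+2)) (n+2) : ℚ))) * h1
      + (-(((n:ℚ)+2)^2*((n:ℚ)+3)*((n:ℚ)+4)
          * (Nat.choose (2*(n+2)) (n+2) : ℚ))) * h2
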